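/- Let I=⟨A,∅,R,R?⟩ be an AtIAF and S⊆A a set of arguments such that S is not stable-ad with respect to I. Then for every attack r=(a,b)∈R? such that a∉S or b∉S: r∈RE⁻(I,S,(ad,true)) if and only if a∉S⁻_I, a∉S⁺_I, and b∈S. -/

import Mathlib

universe u

/-- An abstract argumentation framework: a set of arguments with an attack relation. -/
structure AF (α : Type u) where
  args : Set α
  att : Set (α × α)

namespace AF

variable {α : Type u}

/-- `S⁺_F`: arguments attacked by `S`. -/
def plusSet (F : AF α) (S : Set α) : Set α := {a | a ∈ F.args ∧ ∃ b ∈ S, (b, a) ∈ F.att}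

/-- `S⁻_F`: arguments attacking `S`. -/
def minusSet (F : AF α) (S : Set α) : Set α := {a | a ∈ F.args ∧ ∃ b ∈ S, (a, b) ∈ F.att}

/-- `S` is conflict-free in `F`. -/
def confFree (F : AF α) (S : Set α) : Prop := S ∩ F.plusSet S = ∅

/-- `S` defends `a` in `F`: every attacker of `a` is attacked by `S`. -/
def defends (F : AF α) (S : Set α) (a : α) : Prop := ∀ b, (b, a) ∈ F.att → b ∈ F.plusSet S

/-- The characteristic function `Γ_F(S)`: arguments defended by `S`. -/
def Γ (F : AF α) (S : Set α) : Set α := {a | a ∈ F.args ∧ F.defends S a}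

/-- Admissible: conflict-free and self-defending. -/
def isAd (F : AF α) (S : Set α) : Prop := S ⊆ F.args ∧ F.confFree S ∧ S ⊆ F.Γ S

/-- Stable: conflict-free and attacking exactly the outside. -/
def isSt (F : AF α) (S : Set α) : Prop := S ⊆ F.args ∧ F.confFree S ∧ F.plusSet S = F.args \ S

/-- Complete: admissible and containing all defended arguments. -/
def isCo (F : AF α) (S : Set α) : Prop := F.isAd S ∧ F.Γ S ⊆ S

/-- Grounded: ⊆-minimal complete. -/
def isGr (F : AF α) (S : Set α) : Prop := F.isCo S ∧ ∀ T, F.isCo T → T ⊆ S → T = S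

/-- Preferred: ⊆-maximal admissible. -/
def isPr (F : AF α) (S : Set α) : Prop := F.isAd S ∧ ∀ T, F.isAd T → S ⊆ T → S = T

end AF

/-- The five common semantics. -/
inductive Sem : Type
  | ad | st | co | gr | pr
deriving DecidableEq

/-- `S` is a `σ`-extension of `F`. -/
def extOf {α : Type u} : Sem → AF α → Set α → Prop
  | .ad => AF.isAd
  | .st => AF.isSt
  | .co => AF.isCo
  | .gr => AF.isGr
  | .pr => AF.isPr

/-- An incomplete argumentation framework (data part). -/
structure IAF (α : Type u) where
  A : Set α
  Aq : Set α
  R : Set (α × α)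
  Rq : Set (α × α)

namespace IAF

variable {α : Type u}

/-- Well-formedness: `A`,`A?` disjoint; `R`,`R?` disjoint subsets of `(A∪A?)×(A∪A?)`. -/
def WF (I : IAF α) : Prop :=
  Disjoint I.A I.Aq ∧ Disjoint I.R I.Rq ∧
  I.R ⊆ (I.A ∪ I.Aq) ×ˢ (I.A ∪ I.Aq) ∧
  I.Rq ⊆ (I.A ∪ I.Aq) ×ˢ (I.A ∪ I.Aq)

/-- `cert(I)`: the AF projected on the certain part. -/
def cert (I : IAF α) : AF α := ⟨I.A, I.R ∩ I.A ×ˢ I.A⟩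

/-- `I'` is a partial completion of `I`. -/
def PartOf (I' I : IAF α) : Prop :=
  I'.WF ∧ I.A ⊆ I'.A ∧ I'.A ⊆ I.A ∪ I.Aq ∧
  I.R ∩ (I'.A ∪ I'.Aq) ×ˢ (I'.A ∪ I'.Aq) ⊆ I'.R ∧
  I'.R ⊆ I.R ∪ I.Rq ∧ I'.Aq ⊆ I.Aq ∧ I'.Rq ⊆ I.Rq

/-- `F` is a completion of `I`. -/
def IsCompletion (I : IAF α) (F : AF α) : Prop := ∃ I' : IAF α, I'.PartOf I ∧ F = I'.cert

/-- `I + R₀` for a set of uncertain attacks. -/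
def addR (I : IAF α) (R0 : Set (α × α)) : IAF α := ⟨I.A, I.Aq, I.R ∪ R0, I.Rq \ R0⟩

/-- `I − R₀` for a set of uncertain attacks. -/
def subR (I : IAF α) (R0 : Set (α × α)) : IAF α := ⟨I.A, I.Aq, I.R, I.Rq \ R0⟩

/-- `I + A₀` for a set of uncertain arguments. -/
def addA (I : IAF α) (A0 : Set α) : IAF α := ⟨I.A ∪ A0, I.Aq \ A0, I.R, I.Rq⟩

/-- `I − A₀` for a set of uncertain arguments. -/
def subA (I : IAF α) (A0 : Set α) : IAF α :=
  ⟨I.A, I.Aq \ A0,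
   I.R \ {p | p ∈ I.R ∪ I.Rq ∧ (p.1 ∈ A0 ∨ p.2 ∈ A0)},
   I.Rq \ {p | p ∈ I.R ∪ I.Rq ∧ (p.1 ∈ A0 ∨ p.2 ∈ A0)}⟩

/-- `S⁺_I`. -/
def plusI (I : IAF α) (S : Set α) : Set α := {a | a ∈ I.A ∪ I.Aq ∧ ∃ b ∈ S, (b, a) ∈ I.R}

/-- `S⁻_I`. -/
def minusI (I : IAF α) (S : Set α) : Set α := {a | a ∈ I.A ∪ I.Aq ∧ ∃ b ∈ S, (a, b) ∈ I.R}

/-- `S^∼_I`. -/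
def simI (I : IAF α) (S : Set α) : Set α :=
  {a | a ∈ I.A ∪ I.Aq ∧ ∀ b ∈ S, (b, a) ∉ I.R ∪ I.Rq}

end IAF

/-- An element of an IAF: either an argument or an attack. -/
inductive Elem (α : Type u) : Type u
  | arg (a : α)
  | att (r : α × α)

/-- `e` is an uncertain element of `I`, i.e. `e ∈ A? ∪ R?`. -/
def IAF.isUnc {α : Type u} (I : IAF α) : Elem α → Prop
  | .arg a => a ∈ I.Aq
  | .att r => r ∈ I.Rq

/-- `I + {e}`. -/
def IAF.addE {α : Type u} (I : IAF α) : Elem α → IAF α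
  | .arg a => I.addA {a}
  | .att r => I.addR {r}

/-- `I − {e}`. -/
def IAF.subE {α : Type u} (I : IAF α) : Elem α → IAF α
  | .arg a => I.subA {a}
  | .att r => I.subR {r}

/-- `e` is the unique uncertain element of `I`, i.e. `A? ∪ R? = {e}`. -/
def onlyUnc {α : Type u} (I : IAF α) : Elem α → Prop
  | .arg a => I.Aq = {a} ∧ I.Rq = ∅
  | .att r => I.Aq = ∅ ∧ I.Rq = {r}

/-- A verification status: a semantics together with true/false. -/
abbrev VStatus := Sem × Bool

/-- `S` has verification status `j` in the AF `F`. -/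
def hasStatus {α : Type u} (F : AF α) (S : Set α) (j : VStatus) : Prop :=
  cond j.2 (extOf j.1 F S) (¬ extOf j.1 F S)

/-- `S` is stable-`j` w.r.t. `I`. -/
def IAF.stableJ {α : Type u} (I : IAF α) (S : Set α) (j : VStatus) : Prop :=
  ∀ F, I.IsCompletion F → hasStatus F S j

/-- `S` is stable-`σ` w.r.t. `I`. -/
def IAF.stableSem {α : Type u} (I : IAF α) (S : Set α) (σ : Sem) : Prop :=
  I.stableJ S (σ, true) ∨ I.stableJ S (σ, false)

/-- `RE⁺(I,S,j)`: uncertain elements whose addition is `j`-relevant for `S` w.r.t. `I`. -/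
def REplus {α : Type u} (I : IAF α) (S : Set α) (j : VStatus) : Set (Elem α) :=
  {e | I.isUnc e ∧ ∃ I' : IAF α, I'.PartOf I ∧ onlyUnc I' e ∧
    hasStatus (I'.addE e).cert S j ∧ ¬ hasStatus (I'.subE e).cert S j}

/-- `RE⁻(I,S,j)`: uncertain elements whose removal is `j`-relevant for `S` w.r.t. `I`. -/
def REminus {α : Type u} (I : IAF α) (S : Set α) (j : VStatus) : Set (Elem α) :=
  {e | I.isUnc e ∧ ∃ I' : IAF α, I'.PartOf I ∧ onlyUnc I' e ∧
    hasStatus (I'.subE e).cert S j ∧ ¬ hasStatus (I'.addE e).cert S j}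

/-- `e` is `σ`-irrelevant for `S` w.r.t. `I`. -/
def irrelevant {α : Type u} (I : IAF α) (S : Set α) (σ : Sem) (e : Elem α) : Prop :=
  e ∉ REplus I S (σ, true) ∧ e ∉ REminus I S (σ, true) ∧
  e ∉ REplus I S (σ, false) ∧ e ∉ REminus I S (σ, false)

/-- `PosVer_σ(I,S) = true`. -/
def PosVer {α : Type u} (σ : Sem) (I : IAF α) (S : Set α) : Prop :=
  ∃ F, I.IsCompletion F ∧ extOf σ F S

/-- `NecVer_σ(I,S) = true`. -/
def NecVer {α : Type u} (σ : Sem) (I : IAF α) (S : Set α) : Prop :=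
  ∀ F, I.IsCompletion F → extOf σ F S

/-- `SRE⁺(I,S,j)`: uncertain elements whose addition is strongly `j`-relevant. -/
def SREplus {α : Type u} (I : IAF α) (S : Set α) (j : VStatus) : Set (Elem α) :=
  {e | I.isUnc e ∧ ∀ I' : IAF α, I'.PartOf (I.subE e) → ¬ I'.stableJ S j}

/-- `SRE⁻(I,S,j)`: uncertain elements whose removal is strongly `j`-relevant. -/
def SREminus {α : Type u} (I : IAF α) (S : Set α) (j : VStatus) : Set (Elem α) :=
  {e | I.isUnc e ∧ ∀ I' : IAF α, I'.PartOf (I.addE e) → ¬ I'.stableJ S j}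

/-- The `OutRel(I,S,(a,b))` predicate. -/
def OutRel {α : Type u} (I : IAF α) (S : Set α) (r : α × α) : Prop :=
  (I.minusI {r.2} \ {r.1}) ∩ I.simI S = ∅ ∧
  PosVer Sem.co
    ((I.addR {p | p ∈ I.Rq ∧ p.1 ∈ S ∧ p.2 ∈ I.minusI {r.2} \ {r.1}}).subR
      {p | p ∈ I.Rq ∧ p.1 ≠ r.1 ∧ p.2 = r.2}) S


section AuxStmt4

variable {α : Type u}

private lemma plus_union_aux {A : Set α} {Q : Set (α × α)} {S : Set α} {a b : α}
    (ha : a ∉ S) :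
    AF.plusSet ⟨A, Q ∪ {(a, b)}⟩ S = AF.plusSet ⟨A, Q⟩ S := by
  ext x
  simp only [AF.plusSet, Set.mem_setOf_eq, Set.mem_union, Set.mem_singleton_iff,
    Prod.mk.injEq]
  constructor
  · rintro ⟨hx, c, hc, hQ | ⟨hca, hxb⟩⟩
    · exact ⟨hx, c, hc, hQ⟩
    · exact absurd (hca ▸ hc) ha
  · rintro ⟨hx, c, hc, hQ⟩
    exact ⟨hx, c, hc, Or.inl hQ⟩

/-- Adding an attack `(a,b)` with `a ∉ S` preserves admissibility provided
`S` attacks `a` whenever `b ∈ S`. -/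
private lemma ad_insert_aux {A : Set α} {Q : Set (α × α)} {S : Set α} {a b : α}
    (ha : a ∉ S) (hdef : b ∈ S → a ∈ AF.plusSet ⟨A, Q⟩ S)
    (h : AF.isAd ⟨A, Q⟩ S) : AF.isAd ⟨A, Q ∪ {(a, b)}⟩ S := by
  obtain ⟨hsub, hcf, hΓ⟩ := h
  refine ⟨hsub, ?_, fun s hs => ?_⟩
  · show S ∩ AF.plusSet ⟨A, Q ∪ {(a, b)}⟩ S = ∅
    rw [plus_union_aux ha]; exact hcf
  · obtain ⟨hsA, hd⟩ := hΓ hs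
    refine ⟨hsA, fun x hx => ?_⟩
    show x ∈ AF.plusSet ⟨A, Q ∪ {(a, b)}⟩ S
    rw [plus_union_aux ha]
    rcases hx with hx | hx
    · exact hd x hx
    · have h1 : x = a := congrArg Prod.fst hx
      have h2 : s = b := congrArg Prod.snd hx
      subst h1
      exact hdef (h2 ▸ hs)

/-- Adding an attack `(a,b)` with `b ∉ S` preserves admissibility. -/
private lemma ad_insert'_aux {A : Set α} {Q : Set (α × α)} {S : Set α} {a b : α}
    (hb : b ∉ S) (h : AF.isAd ⟨A, Q⟩ S) : AF.isAd ⟨A, Q ∪ {(a, b)}⟩ S := by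
  obtain ⟨hsub, hcf, hΓ⟩ := h
  have hcf' : ∀ x, x ∈ S → x ∉ AF.plusSet ⟨A, Q⟩ S := fun x hx hp =>
    Set.eq_empty_iff_forall_notMem.mp hcf x ⟨hx, hp⟩
  refine ⟨hsub, ?_, fun s hs => ?_⟩
  · show S ∩ AF.plusSet ⟨A, Q ∪ {(a, b)}⟩ S = ∅
    rw [Set.eq_empty_iff_forall_notMem]
    rintro x ⟨hxS, hxA, c, hc, hQ | hEq⟩
    · exact hcf' x hxS ⟨hxA, c, hc, hQ⟩
    · have h2 : x = b := congrArg Prod.snd hEq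
      exact hb (h2 ▸ hxS)
  · obtain ⟨hsA, hd⟩ := hΓ hs
    refine ⟨hsA, fun x hx => ?_⟩
    rcases hx with hx | hx
    · obtain ⟨hxA, c, hc, hcx⟩ := hd x hx
      exact ⟨hxA, c, hc, Or.inl hcx⟩
    · have h2 : s = b := congrArg Prod.snd hx
      exact absurd (h2 ▸ hs) hb

/-- The set of attacks involving `a` and `S` that we prune away. -/
private def prSet (S : Set α) (a : α) : Set (α × α) :=
  {p : α × α | (p.1 = a ∧ p.2 ∈ S) ∨ (p.1 ∈ S ∧ p.2 = a)}

/-- Pruning all attacks between `a ∉ S` and `S` preserves admissibility, and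
afterwards `S` does not attack `a`. -/
private lemma ad_prune_aux {A : Set α} {Q : Set (α × α)} {S : Set α} {a : α}
    (ha : a ∉ S) (h : AF.isAd ⟨A, Q⟩ S) :
    AF.isAd ⟨A, Q \ prSet S a⟩ S ∧ a ∉ AF.plusSet ⟨A, Q \ prSet S a⟩ S := by
  obtain ⟨hsub, hcf, hΓ⟩ := h
  have hcf' : ∀ x, x ∈ S → x ∉ AF.plusSet ⟨A, Q⟩ S := fun x hx hp =>
    Set.eq_empty_iff_forall_notMem.mp hcf x ⟨hx, hp⟩
  constructor
  · refine ⟨hsub, ?_, fun s hs => ?_⟩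
    · show S ∩ AF.plusSet ⟨A, Q \ prSet S a⟩ S = ∅
      rw [Set.eq_empty_iff_forall_notMem]
      rintro x ⟨hxS, hxA, c, hc, hcx⟩
      exact hcf' x hxS ⟨hxA, c, hc, hcx.1⟩
    · obtain ⟨hsA, hd⟩ := hΓ hs
      refine ⟨hsA, fun x hx => ?_⟩
      obtain ⟨hxQ, hxD⟩ := hx
      have hxa : x ≠ a := by
        intro hxa
        exact hxD (Or.inl ⟨hxa, hs⟩)
      obtain ⟨hxA, c, hc, hcx⟩ := hd x hxQ
      refine ⟨hxA, c, hc, hcx, ?_⟩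
      rintro (⟨hca, _⟩ | ⟨_, hxa'⟩)
      · exact ha (hca ▸ hc)
      · exact hxa hxa'
  · rintro ⟨haA, c, hc, hcQ, hcD⟩
    exact hcD (Or.inr ⟨hc, rfl⟩)

end AuxStmt4

/-- characterization of `(ad,true)`-relevance of removal in an AtIAF. -/
theorem stmt4 {α : Type u} (I : IAF α) (S : Set α)
    (hWF : I.WF) (hAt : I.Aq = ∅) (hS : S ⊆ I.A)
    (hns : ¬ I.stableSem S Sem.ad) :
    ∀ r ∈ I.Rq, (r.1 ∉ S ∨ r.2 ∉ S) →
      (Elem.att r ∈ REminus I S (Sem.ad, true) ↔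
        r.1 ∉ I.minusI S ∧ r.1 ∉ I.plusI S ∧ r.2 ∈ S) := by
  intro r hr hab
  obtain ⟨a, b⟩ := r
  simp only at hab ⊢
  -- basic facts
  have hAA : I.A ∪ I.Aq = I.A := by rw [hAt, Set.union_empty]
  have hrAA : (a, b) ∈ I.A ×ˢ I.A := by
    have := hWF.2.2.2 hr
    rwa [hAA] at this
  have haA : a ∈ I.A := hrAA.1
  have hbA : b ∈ I.A := hrAA.2
  constructor
  · -- forward direction
    rintro ⟨-, I', hPart, hOnly, hSub, hAdd⟩
    obtain ⟨hAq', hRq'⟩ := hOnly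
    have hA' : I'.A = I.A := by
      refine Set.Subset.antisymm ?_ hPart.2.1
      have := hPart.2.2.1
      rwa [hAA] at this
    have hQsub : I'.R ⊆ I.A ×ˢ I.A := by
      have := hPart.1.2.2.1
      rwa [hAq', Set.union_empty, hA'] at this
    -- identify the two certified AFs
    have hcert1 : (I'.subE (Elem.att (a, b))).cert = AF.mk I.A I'.R := by
      show (I'.subR {(a, b)}).cert = _
      simp only [IAF.subR, IAF.cert, hA']
      congr 1
      exact Set.inter_eq_left.mpr hQsub
    have hcert2 : (I'.addE (Elem.att (a, b))).cert = AF.mk I.A (I'.R ∪ {(a, b)}) := by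
      show (I'.addR {(a, b)}).cert = _
      simp only [IAF.addR, IAF.cert, hA']
      congr 1
      refine Set.inter_eq_left.mpr ?_
      rintro p (hp | hp)
      · exact hQsub hp
      · rwa [hp]
    have hSub' : AF.isAd ⟨I.A, I'.R⟩ S := by
      have : AF.isAd (I'.subE (Elem.att (a, b))).cert S := hSub
      rwa [hcert1] at this
    have hAdd' : ¬ AF.isAd ⟨I.A, I'.R ∪ {(a, b)}⟩ S := by
      intro hcon
      exact hAdd (by rw [hcert2]; exact hcon)
    -- b ∈ S
    have hbS : b ∈ S := by
      by_contra hbS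
      exact hAdd' (ad_insert'_aux hbS hSub')
    have haS : a ∉ S := by
      rcases hab with h | h
      · exact h
      · exact absurd hbS h
    -- certain attacks inside A×A belong to I'.R
    have hRsub : I.R ∩ I.A ×ˢ I.A ⊆ I'.R := by
      have := hPart.2.2.2.1
      rwa [hAq', Set.union_empty, hA'] at this
    refine ⟨?_, ?_, hbS⟩
    · -- a ∉ minusI S
      rintro ⟨-, s, hsS, hasR⟩
      have hmem : (a, s) ∈ I'.R := hRsub ⟨hasR, haA, hS hsS⟩
      obtain ⟨hsA, hd⟩ := hSub'.2.2 hsS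
      have haP : a ∈ AF.plusSet ⟨I.A, I'.R⟩ S := hd a hmem
      exact hAdd' (ad_insert_aux haS (fun _ => haP) hSub')
    · -- a ∉ plusI S
      rintro ⟨-, c, hcS, hcaR⟩
      have hmem : (c, a) ∈ I'.R := hRsub ⟨hcaR, hS hcS, haA⟩
      have haP : a ∈ AF.plusSet ⟨I.A, I'.R⟩ S := ⟨haA, c, hcS, hmem⟩
      exact hAdd' (ad_insert_aux haS (fun _ => haP) hSub')
  · -- backward direction
    rintro ⟨hmin, hplus, hbS⟩
    have haS : a ∉ S := by
      rcases hab with h | h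
      · exact h
      · exact absurd hbS h
    -- get a completion where S is admissible
    have hex : ∃ F, I.IsCompletion F ∧ AF.isAd F S := by
      by_contra hno
      push_neg at hno
      refine hns (Or.inr (fun F hF => ?_))
      show ¬ AF.isAd F S
      exact hno F hF
    obtain ⟨F, ⟨I'', hPart'', hFeq⟩, hFad⟩ := hex
    have hA'' : I''.A = I.A := by
      refine Set.Subset.antisymm ?_ hPart''.2.1
      have := hPart''.2.2.1
      rwa [hAA] at this
    -- the admissible AF on arguments A
    set Q : Set (α × α) := I''.R ∩ I.A ×ˢ I.A with hQdef
    have hQad : AF.isAd ⟨I.A, Q⟩ S := by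
      have : F = AF.mk I.A Q := by rw [hFeq]; simp only [IAF.cert, hA'']; rfl
      rwa [this] at hFad
    -- prune attacks between a and S
    set Q' : Set (α × α) := Q \ prSet S a with hQ'def
    obtain ⟨hQ'ad, hQ'nplus⟩ := ad_prune_aux haS hQad
    have hrD : (a, b) ∈ prSet S a := Or.inl ⟨rfl, hbS⟩
    have hrQ' : (a, b) ∉ Q' := fun hc => hc.2 hrD
    have hQ'sub : Q' ⊆ I.A ×ˢ I.A := fun p hp => hp.1.2
    -- the witnessing partial completion
    refine ⟨hr, ⟨I.A, ∅, Q', {(a, b)}⟩, ?_, ⟨rfl, rfl⟩, ?_, ?_⟩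
    · -- PartOf
      refine ⟨⟨Set.disjoint_empty _, ?_, ?_, ?_⟩, le_refl _, ?_, ?_, ?_, ?_, ?_⟩
      · exact Set.disjoint_singleton_right.mpr hrQ'
      · simpa [Set.union_empty] using hQ'sub
      · simpa [Set.union_empty] using Set.singleton_subset_iff.mpr hrAA
      · rw [hAt, Set.union_empty]
      · -- I.R ∩ A×A ⊆ Q'
        rw [Set.union_empty]
        rintro ⟨x, y⟩ ⟨hxyR, hxA, hyA⟩
        have hxyQ : (x, y) ∈ Q := by
          refine ⟨?_, hxA, hyA⟩
          apply hPart''.2.2.2.1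
          refine ⟨hxyR, ?_, ?_⟩
          · left; exact hPart''.2.1 hxA
          · left; exact hPart''.2.1 hyA
        refine ⟨hxyQ, ?_⟩
        rintro (⟨hxa, hyS⟩ | ⟨hxS, hya⟩)
        · exact hmin ⟨Or.inl haA, y, hyS, hxa ▸ hxyR⟩
        · exact hplus ⟨Or.inl haA, x, hxS, hya ▸ hxyR⟩
      · -- Q' ⊆ I.R ∪ I.Rq
        intro p hp
        exact hPart''.2.2.2.2.1 hp.1.1
      · exact Set.empty_subset _
      · exact Set.singleton_subset_iff.mpr hr
    · -- S admissible in cert(I' − r)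
      show AF.isAd (IAF.cert (IAF.subR ⟨I.A, ∅, Q', {(a, b)}⟩ {(a, b)})) S
      have : IAF.cert (IAF.subR ⟨I.A, ∅, Q', {(a, b)}⟩ {(a, b)}) = AF.mk I.A Q' := by
        simp only [IAF.subR, IAF.cert]
        congr 1
        exact Set.inter_eq_left.mpr hQ'sub
      rw [this]
      exact hQ'ad
    · -- S not admissible in cert(I' + r)
      show ¬ AF.isAd (IAF.cert (IAF.addR ⟨I.A, ∅, Q', {(a, b)}⟩ {(a, b)})) S
      have hc : IAF.cert (IAF.addR ⟨I.A, ∅, Q', {(a, b)}⟩ {(a, b)}) =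
          AF.mk I.A (Q' ∪ {(a, b)}) := by
        simp only [IAF.addR, IAF.cert]
        congr 1
        refine Set.inter_eq_left.mpr ?_
        rintro p (hp | hp)
        · exact hQ'sub hp
        · rwa [hp]
      rw [hc]
      intro hcon
      obtain ⟨-, hd⟩ := hcon.2.2 hbS
      have : a ∈ AF.plusSet ⟨I.A, Q' ∪ {(a, b)}⟩ S := hd a (Or.inr rfl)
      rw [plus_union_aux haS] at this
      exact hQ'nplus this
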